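/- Let G be a graph whose edge set is partitioned into matchings M1, ..., Mc (a proper c-edge-colouring). If all edges of M1 are assigned times before all edges of M2, which come before all of M3, etc., and times within each Mi are assigned arbitrarily and injectively, then every vertex's temporal reachability set has cardinality at most 2^c. -/

import Mathlib

variable {V : Type*}

/-- Strict temporal reachability: `TReach G t u v τ` means there is a strict temporal
path from `u` to `v` whose last edge is active at time `τ`. -/
inductive TReach (G : SimpleGraph V) (t : Sym2 V → ℕ) (u : V) : V → ℕ → Prop
  | single {v : V} (h : G.Adj u v) : TReach G t u v (t s(u, v))
  | cons {v w : V} {τ : ℕ} (h : TReach G t u v τ) (hadj : G.Adj v w)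
      (hlt : τ < t s(v, w)) : TReach G t u w (t s(v, w))

/-- The temporal reachability set of `u`: `u` together with all vertices reachable
from `u` by a strict temporal path. -/
def reachSet (G : SimpleGraph V) (t : Sym2 V → ℕ) (u : V) : Set V :=
  {v | v = u ∨ ∃ τ, TReach G t u v τ}

/-- If the edges of `G` are properly coloured with `cn` colours (each colour class a
matching) and the injective time assignment `t` orders all edges of each colour class
before all edges of every later colour class, then every temporal reachability set has
cardinality at most `2 ^ cn`. -/
theorem stmt_13 {V : Type*} [Fintype V] (G : SimpleGraph V) (cn : ℕ)
    (col : Sym2 V → Fin cn)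
    (hmatch : ∀ e ∈ G.edgeSet, ∀ e' ∈ G.edgeSet, e ≠ e' → col e = col e' →
        ∀ a : V, a ∈ e → a ∉ e')
    (t : Sym2 V → ℕ) (ht : Set.InjOn t G.edgeSet)
    (hord : ∀ e ∈ G.edgeSet, ∀ e' ∈ G.edgeSet, col e < col e' → t e < t e') :
    ∀ v : V, (reachSet G t v).ncard ≤ 2 ^ cn := by
  classical
  intro u
  set step : V → Fin cn → V := fun v i =>
    if h : ∃ w, G.Adj v w ∧ col s(v, w) = i then h.choose else v with hstep
  have hstep_eq : ∀ v w, G.Adj v w → step v (col s(v, w)) = w := by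
    intro v w hadj
    have hex : ∃ w', G.Adj v w' ∧ col s(v, w') = col s(v, w) := ⟨w, hadj, rfl⟩
    simp only [hstep, dif_pos hex]
    obtain ⟨hadj', hcol'⟩ := hex.choose_spec
    set w' := hex.choose with hw'
    have hkey : s(v, w') = s(v, w) := by
      by_contra hne
      exact hmatch _ (G.mem_edgeSet.mpr hadj') _ (G.mem_edgeSet.mpr hadj) hne hcol' v
        (Sym2.mem_mk_left v w') (Sym2.mem_mk_left v w)
    rcases Sym2.eq_iff.mp hkey with ⟨_, h2⟩ | ⟨h1, h2⟩
    · exact h2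
    · exact absurd h1 hadj.ne
  have main : ∀ v τ, TReach G t u v τ →
      ∃ L : List (Fin cn), List.Chain' (· < ·) L ∧ List.foldl step u L = v ∧
        ∃ c : Fin cn, L.getLast? = some c ∧
        ∃ e ∈ G.edgeSet, t e = τ ∧ col e = c ∧ v ∈ e := by
    intro v τ h
    induction h with
    | @single v hadj =>
        exact ⟨[col s(u, v)], List.isChain_singleton _, by simpa using hstep_eq u v hadj,
          col s(u, v), rfl, s(u, v), G.mem_edgeSet.mpr hadj, rfl, rfl,
          Sym2.mem_mk_right u v⟩
    | @cons v w τ h hadj hlt ih =>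
        obtain ⟨L, hchain, hfold, c, hlast, e, heE, hte, hce, hve⟩ := ih
        have hE' : s(v, w) ∈ G.edgeSet := G.mem_edgeSet.mpr hadj
        have hclt : c < col s(v, w) := by
          rcases lt_trichotomy (col s(v, w)) c with hl | heq | hg
          · have := hord _ hE' _ heE (hce ▸ hl)
            omega
          · have hne : e ≠ s(v, w) := by
              intro h'; rw [h'] at hte; omega
            exact absurd (Sym2.mem_mk_left v w)
              (hmatch e heE _ hE' hne (hce.trans heq.symm) v hve)
          · exact hg
        refine ⟨L ++ [col s(v, w)], ?_, ?_, col s(v, w), ?_, s(v, w), hE', rfl, rfl,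
          Sym2.mem_mk_right v w⟩
        · refine List.IsChain.append hchain (by simp) ?_
          intro x hx y hy
          rw [hlast] at hx
          simp at hx hy
          exact hx ▸ hy ▸ hclt
        · simpa [hfold] using hstep_eq v w hadj
        · simp
  set g : Finset (Fin cn) → V := fun S => (S.sort (· ≤ ·)).foldl step u with hg
  have hsub : reachSet G t u ⊆ ↑(Finset.univ.image g) := by
    intro v hv
    simp only [Finset.coe_image, Finset.coe_univ, Set.image_univ, Set.mem_range]
    rcases hv with rfl | ⟨τ, hr⟩
    · exact ⟨∅, by simp [hg]⟩
    · obtain ⟨L, hchain, hfold, _⟩ := main v τ hr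
      have hpw : L.Pairwise (· < ·) := List.isChain_iff_pairwise.mp hchain
      have hnd : L.Nodup := hpw.imp ne_of_lt
      refine ⟨L.toFinset, ?_⟩
      rw [hg]
      dsimp only
      rw [(List.toFinset_sort (· ≤ ·) hnd).mpr (hpw.imp le_of_lt)]
      exact hfold
  calc (reachSet G t u).ncard ≤ (↑(Finset.univ.image g) : Set V).ncard :=
        Set.ncard_le_ncard hsub (Finset.univ.image g).finite_toSet
    _ = (Finset.univ.image g).card := Set.ncard_coe_finset _
    _ ≤ (Finset.univ : Finset (Finset (Fin cn))).card := Finset.card_image_le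
    _ = 2 ^ cn := by simp [Fintype.card_finset]
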